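/- For each integer s ≥ 1 there exists a polynomial p_s ∈ ℚ[x] of degree s such that ã^P_k(k−s) = p_s(k) for every integer k ≥ s (here ã^P_k(k−s) denotes the defining formula for ã^P_k evaluated at x = k−s). The coefficient of x^s in p_s equals (−1)^{s+1}/s!, and the coefficient of x^{s−1} equals (−1)^s·(s+1)/(2·(s−1)!). Moreover p_s(s) = 0 (equivalently ã^P_s(0) = 0), so that x − s divides p_s. -/

import Mathlib

/-- Falling factorial `x(x-1)⋯(x-n+1)` in `ℚ`. -/
def ffall (x : ℚ) (n : ℕ) : ℚ := ∏ i ∈ Finset.range n, (x - (i : ℚ))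

/-- Generalized binomial coefficient: `C(x, n) = x(x-1)⋯(x-n+1)/n!` for `n ≥ 0`,
and `C(x, n) = 0` for `n < 0`. -/
def gchoose (x : ℚ) (n : ℤ) : ℚ :=
  if 0 ≤ n then ffall x n.toNat / ((n.toNat).factorial : ℚ) else 0

/-- The function `ã^P_k(x)`. -/
def aP (k : ℕ) (x : ℚ) : ℚ :=
  3 ^ k * gchoose x k
  + ∑ p ∈ Finset.Icc 1 k, (-1 : ℚ) ^ p * (x / p) * gchoose (x - p - 1) ((p : ℤ) - 1) *
    ∑ r ∈ Finset.range (k - p + 1),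
      3 ^ r * gchoose (x - 2 * p) r * gchoose (p : ℚ) ((k : ℤ) - p - r)

lemma gchoose_natCast (x : ℚ) (n : ℕ) :
    gchoose x (n : ℤ) = ffall x n / (n.factorial : ℚ) := by
  simp [gchoose]

lemma gchoose_neg' (x : ℚ) (n : ℤ) (h : n < 0) : gchoose x n = 0 := by
  simp [gchoose, not_le.2 h]

lemma ffall_eq_zero (x : ℚ) (n i : ℕ) (hi : i < n) (hx : x = i) : ffall x n = 0 :=
  Finset.prod_eq_zero (Finset.mem_range.2 hi) (by rw [hx, sub_self])

lemma gchoose_nat_eq_zero (m n : ℕ) (h : m < n) : gchoose (m : ℚ) (n : ℤ) = 0 := by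
  rw [gchoose_natCast, ffall_eq_zero (m : ℚ) n m h rfl, zero_div]

lemma ffall_neg_sub (y : ℚ) (n : ℕ) :
    ffall (-y - 1) n = (-1) ^ n * ffall (y + n) n := by
  unfold ffall
  rw [← Finset.prod_range_reflect (fun i => (y + n) - (i : ℚ)) n]
  have hc : ((-1 : ℚ)) ^ n = ∏ _i ∈ Finset.range n, (-1 : ℚ) := by
    rw [Finset.prod_const, Finset.card_range]
  rw [hc, ← Finset.prod_mul_distrib]
  refine Finset.prod_congr rfl fun i hi => ?_
  rw [Finset.mem_range] at hi
  have : ((n - 1 - i : ℕ) : ℚ) = (n : ℚ) - 1 - i := by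
    have h1 : i ≤ n - 1 := by omega
    push_cast [Nat.sub_sub, Nat.cast_sub (by omega : 1 + i ≤ n)]
    ring
  rw [this]; ring

lemma ffall_natCast_mul (n r : ℕ) (h : r ≤ n) :
    ffall (n : ℚ) r * (((n - r).factorial : ℕ) : ℚ) = (n.factorial : ℚ) := by
  induction r with
  | zero => simp [ffall]
  | succ t ih =>
    have ht : t ≤ n := Nat.le_of_succ_le h
    have h1 : ffall (n : ℚ) (t + 1) = ffall (n : ℚ) t * ((n : ℚ) - t) := by
      rw [ffall, ffall, Finset.prod_range_succ]
    have h2 : n - t = (n - (t+1)) + 1 := by omega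
    have h3 : ((n - t).factorial : ℚ) = (((n - (t+1)) + 1 : ℕ) : ℚ) * ((n - (t+1)).factorial : ℚ) := by
      rw [h2, Nat.factorial_succ]; push_cast; ring
    have h4 : ((n : ℚ) - t) = (((n - (t+1)) + 1 : ℕ) : ℚ) := by
      push_cast [Nat.cast_sub h]; ring
    rw [h1, h4, ← ih ht, h3]
    ring

lemma ffall_self (n : ℕ) : ffall (n : ℚ) n = (n.factorial : ℚ) := by
  have := ffall_natCast_mul n n le_rfl
  simpa using this

lemma key1 (a m : ℕ) (ha : 1 ≤ a) (hm : 1 ≤ m) :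
    (-1:ℚ)^m * gchoose (-(a:ℚ)-1) ((m:ℤ)-1) / m
      = -ffall ((m:ℚ)+(a:ℚ)-1) (a-1) / (a.factorial : ℚ) := by
  have hm1 : ((m:ℤ) - 1) = ((m - 1 : ℕ) : ℤ) := by omega
  rw [hm1, gchoose_natCast]
  have hns : ffall (-(a:ℚ)-1) (m-1) = (-1)^(m-1) * ffall ((a:ℚ) + (m-1 : ℕ)) (m-1) :=
    ffall_neg_sub (a : ℚ) (m-1)
  set N := a + m - 1 with hN
  have hc1 : (a:ℚ) + ((m-1 : ℕ) : ℚ) = (N : ℚ) := by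
    rw [hN]; push_cast [Nat.cast_sub hm, Nat.cast_sub (by omega : 1 ≤ a + m)]; ring
  have hc2 : (m:ℚ) + (a:ℚ) - 1 = (N : ℚ) := by
    rw [hN]; push_cast [Nat.cast_sub (by omega : 1 ≤ a + m)]; ring
  have hfa : ffall (N : ℚ) (m-1) * ((a.factorial : ℕ) : ℚ) = (N.factorial : ℚ) := by
    have := ffall_natCast_mul N (m-1) (by omega)
    have hz : N - (m-1) = a := by omega
    rwa [hz] at this
  have hfb : ffall (N : ℚ) (a-1) * ((m.factorial : ℕ) : ℚ) = (N.factorial : ℚ) := by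
    have := ffall_natCast_mul N (a-1) (by omega)
    have hz : N - (a-1) = m := by omega
    rwa [hz] at this
  rw [hc2, hns, hc1]
  have hsgn : (-1:ℚ)^m * (-1:ℚ)^(m-1) = -1 := by
    have : m + (m-1) = 2*(m-1)+1 := by omega
    rw [← pow_add, this, pow_succ, pow_mul]; norm_num
  have hmf : (m.factorial : ℚ) = (m : ℚ) * ((m-1).factorial : ℚ) := by
    have : m = (m-1)+1 := by omega
    rw [this, Nat.factorial_succ]; push_cast; ring
  have h1 : ((m-1).factorial : ℚ) ≠ 0 := Nat.cast_ne_zero.2 (Nat.factorial_ne_zero _)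
  have h2 : (a.factorial : ℚ) ≠ 0 := Nat.cast_ne_zero.2 (Nat.factorial_ne_zero _)
  have h3 : (m : ℚ) ≠ 0 := Nat.cast_ne_zero.2 (by omega)
  have h4 : (m.factorial : ℚ) ≠ 0 := Nat.cast_ne_zero.2 (Nat.factorial_ne_zero _)
  field_simp
  linear_combination (ffall (N:ℚ) (m-1) * ((a.factorial : ℕ):ℚ)) * hsgn - hfa + hfb
    - (ffall (N:ℚ) (a-1)) * hmf

lemma keyS (m : ℕ) (hm : 1 ≤ m) :
    (-1:ℚ)^m * gchoose (-1 : ℚ) ((m:ℤ)-1) = -1 := by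
  have hm1 : ((m:ℤ) - 1) = ((m - 1 : ℕ) : ℤ) := by omega
  rw [hm1, gchoose_natCast]
  have hns : ffall (-(0:ℚ)-1) (m-1) = (-1)^(m-1) * ffall ((0:ℚ) + (m-1 : ℕ)) (m-1) :=
    ffall_neg_sub (0 : ℚ) (m-1)
  have hz : (-(0:ℚ) - 1) = -1 := by ring
  have hz2 : ((0:ℚ) + ((m-1:ℕ):ℚ)) = ((m-1 : ℕ) : ℚ) := by ring
  rw [hz, hz2] at hns
  rw [hns, ffall_self]
  have h1 : ((m-1).factorial : ℚ) ≠ 0 := Nat.cast_ne_zero.2 (Nat.factorial_ne_zero _)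
  have hsgn : (-1:ℚ)^m * (-1:ℚ)^(m-1) = -1 := by
    have : m + (m-1) = 2*(m-1)+1 := by omega
    rw [← pow_add, this, pow_succ, pow_mul]; norm_num
  field_simp
  linear_combination hsgn

lemma SA3 (n : ℕ) : ∑ r ∈ Finset.range (n+1), ((n.choose r : ℚ)) * (-3:ℚ)^r = (-2:ℚ)^n := by
  have := add_pow (-3 : ℚ) 1 n
  norm_num at this
  rw [this]
  exact Finset.sum_congr rfl fun r _ => by ring

lemma SB3 (n : ℕ) : ∑ r ∈ Finset.range (n+1), ((n.choose r : ℚ)) * (-3:ℚ)^r * r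
    = (3/2) * n * (-2:ℚ)^n := by
  cases n with
  | zero => simp
  | succ t =>
    rw [Finset.sum_range_succ']
    simp only [Nat.cast_zero, pow_zero, mul_zero, add_zero]
    have h1 : ∀ i, ((t+1).choose (i+1) : ℚ) * ((i:ℚ)+1) = (t+1) * (t.choose i : ℚ) := by
      intro i
      have := Nat.add_one_mul_choose_eq t i
      have h2 : ((t+1) * t.choose i : ℕ) = ((t+1).choose (i+1) * (i+1) : ℕ) := this
      exact_mod_cast h2.symm
    have : ∀ i ∈ Finset.range (t+1),
        ((t+1).choose (i+1) : ℚ) * (-3:ℚ)^(i+1) * ((i:ℚ)+1)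
          = ((t:ℚ)+1) * (-3) * ((t.choose i : ℚ) * (-3:ℚ)^i) := by
      intro i _
      have := h1 i
      calc ((t+1).choose (i+1) : ℚ) * (-3:ℚ)^(i+1) * ((i:ℚ)+1)
          = (((t+1).choose (i+1) : ℚ) * ((i:ℚ)+1)) * (-3:ℚ)^(i+1) := by ring
        _ = ((t+1) * (t.choose i : ℚ)) * (-3:ℚ)^(i+1) := by rw [this]
        _ = ((t:ℚ)+1) * (-3) * ((t.choose i : ℚ) * (-3:ℚ)^i) := by push_cast; ring
    rw [Finset.sum_congr rfl (fun i hi => by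
      push_cast
      exact this i hi)]
    rw [← Finset.mul_sum, SA3 t]
    push_cast; ring

lemma SA2 (n : ℕ) : ∑ j ∈ Finset.range (n+1), ((n.choose j : ℚ)) * (-2:ℚ)^j = (-1:ℚ)^n := by
  have := add_pow (-2 : ℚ) 1 n
  norm_num at this
  rw [this]
  exact Finset.sum_congr rfl fun r _ => by ring

lemma SB2 (n : ℕ) : ∑ j ∈ Finset.range (n+1), ((n.choose j : ℚ)) * (-2:ℚ)^j * j
    = 2 * n * (-1:ℚ)^n := by
  cases n with
  | zero => simp
  | succ t =>
    rw [Finset.sum_range_succ']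
    simp only [Nat.cast_zero, pow_zero, mul_zero, add_zero]
    have h1 : ∀ i, ((t+1).choose (i+1) : ℚ) * ((i:ℚ)+1) = (t+1) * (t.choose i : ℚ) := by
      intro i
      have h2 : ((t+1) * t.choose i : ℕ) = ((t+1).choose (i+1) * (i+1) : ℕ) :=
        Nat.add_one_mul_choose_eq t i
      exact_mod_cast h2.symm
    rw [Finset.sum_congr rfl (fun i (_ : i ∈ Finset.range (t+1)) => by
      push_cast
      calc ((t+1).choose (i+1) : ℚ) * (-2:ℚ)^(i+1) * ((i:ℚ)+1)
          = (((t+1).choose (i+1) : ℚ) * ((i:ℚ)+1)) * (-2:ℚ)^(i+1) := by ring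
        _ = ((t+1) * (t.choose i : ℚ)) * (-2:ℚ)^(i+1) := by rw [h1 i]
        _ = ((t:ℚ)+1) * (-2) * ((t.choose i : ℚ) * (-2:ℚ)^i) := by push_cast; ring)]
    rw [← Finset.mul_sum, SA2 t]
    push_cast; ring

lemma sum_range_cast (n : ℕ) : ∑ i ∈ Finset.range n, (i : ℚ) = (n:ℚ) * ((n:ℚ)-1) / 2 := by
  induction n with
  | zero => simp
  | succ t ih => rw [Finset.sum_range_succ, ih]; push_cast; ring

open Polynomial Finset in
noncomputable def Mp (s j r : ℕ) : Polynomial ℚ :=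
  (if j < s then (X - C (s:ℚ)) else 1)
  * (∏ i ∈ range (s - j - 1), (X - C ((i:ℚ) - ((s:ℚ) - 2*(j:ℚ) - 1))))
  * (∏ i ∈ range r, (X - C (2*(j:ℚ) - (s:ℚ) - (i:ℚ))))
  * (∏ i ∈ range (j - r), (X - C ((j:ℚ) + (i:ℚ))))

def cf (s j r : ℕ) : ℚ :=
  -(-3:ℚ)^r / (((s-j).factorial : ℚ) * (r.factorial : ℚ) * ((j-r).factorial : ℚ))

open Polynomial Finset in
noncomputable def pPoly (s : ℕ) : Polynomial ℚ :=
  ∑ j ∈ range (s+1), ∑ r ∈ range (j+1), C (cf s j r) * Mp s j r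

open Polynomial Finset

lemma Mp_monic (s j r : ℕ) : (Mp s j r).Monic := by
  unfold Mp
  refine (((?_ : Monic _).mul ?_).mul ?_).mul ?_
  · split
    · exact monic_X_sub_C _
    · exact monic_one
  all_goals exact monic_prod_of_monic _ _ fun i _ => monic_X_sub_C _

lemma Mp_natDegree (s j r : ℕ) (hj : j ≤ s) (hr : r ≤ j) : (Mp s j r).natDegree = s := by
  unfold Mp
  have hd : ∀ (n : ℕ) (f : ℕ → ℚ),
      (∏ i ∈ range n, (X - C (f i))).natDegree = n := fun n f => by
    rw [natDegree_prod_of_monic _ _ (fun i _ => monic_X_sub_C _)]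
    simp [natDegree_X_sub_C]
  have m1 : Monic (if j < s then (X - C (s:ℚ)) else 1) := by
    split
    · exact monic_X_sub_C _
    · exact monic_one
  have m2 : Monic (∏ i ∈ range (s - j - 1), (X - C ((i:ℚ) - ((s:ℚ) - 2*(j:ℚ) - 1)))) :=
    monic_prod_of_monic _ _ fun i _ => monic_X_sub_C _
  have m3 : Monic (∏ i ∈ range r, (X - C (2*(j:ℚ) - (s:ℚ) - (i:ℚ)))) :=
    monic_prod_of_monic _ _ fun i _ => monic_X_sub_C _
  have m4 : Monic (∏ i ∈ range (j - r), (X - C ((j:ℚ) + (i:ℚ)))) :=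
    monic_prod_of_monic _ _ fun i _ => monic_X_sub_C _
  rw [Monic.natDegree_mul ((m1.mul m2).mul m3) m4,
      Monic.natDegree_mul (m1.mul m2) m3, Monic.natDegree_mul m1 m2, hd, hd, hd]
  by_cases h : j < s
  · rw [if_pos h, natDegree_X_sub_C]; omega
  · rw [if_neg h, natDegree_one]; omega

lemma Mp_nextCoeff (s j r : ℕ) :
    (Mp s j r).nextCoeff
      = -((if j < s then (s:ℚ) else 0)
        + (∑ i ∈ range (s - j - 1), ((i:ℚ) - ((s:ℚ) - 2*(j:ℚ) - 1)))
        + (∑ i ∈ range r, (2*(j:ℚ) - (s:ℚ) - (i:ℚ)))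
        + (∑ i ∈ range (j - r), ((j:ℚ) + (i:ℚ)))) := by
  unfold Mp
  have m1 : Monic (if j < s then (X - C (s:ℚ)) else 1) := by
    split
    · exact monic_X_sub_C _
    · exact monic_one
  have m2 : Monic (∏ i ∈ range (s - j - 1), (X - C ((i:ℚ) - ((s:ℚ) - 2*(j:ℚ) - 1)))) :=
    monic_prod_of_monic _ _ fun i _ => monic_X_sub_C _
  have m3 : Monic (∏ i ∈ range r, (X - C (2*(j:ℚ) - (s:ℚ) - (i:ℚ)))) :=
    monic_prod_of_monic _ _ fun i _ => monic_X_sub_C _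
  have m4 : Monic (∏ i ∈ range (j - r), (X - C ((j:ℚ) + (i:ℚ)))) :=
    monic_prod_of_monic _ _ fun i _ => monic_X_sub_C _
  have hnc : ∀ (n : ℕ) (f : ℕ → ℚ),
      (∏ i ∈ range n, (X - C (f i))).nextCoeff = -(∑ i ∈ range n, f i) := fun n f => by
    rw [Monic.nextCoeff_prod _ _ (fun i _ => monic_X_sub_C _)]
    rw [← Finset.sum_neg_distrib]
    exact Finset.sum_congr rfl fun i _ => nextCoeff_X_sub_C _
  rw [Monic.nextCoeff_mul ((m1.mul m2).mul m3) m4,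
      Monic.nextCoeff_mul (m1.mul m2) m3, Monic.nextCoeff_mul m1 m2, hnc, hnc, hnc]
  have h1 : (if j < s then (X - C (s:ℚ)) else 1).nextCoeff
      = -(if j < s then (s:ℚ) else 0) := by
    split
    · exact nextCoeff_X_sub_C _
    · simp [nextCoeff, natDegree_one]
  rw [h1]; ring

lemma sum_lin (n : ℕ) (c : ℚ) :
    ∑ i ∈ range n, ((i:ℚ) + c) = (n:ℚ)*((n:ℚ)-1)/2 + (n:ℚ)*c := by
  rw [Finset.sum_add_distrib, sum_range_cast, Finset.sum_const, card_range, nsmul_eq_mul]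

lemma inner0 (s j : ℕ) (hj : j ≤ s) :
    ∑ r ∈ range (j+1), cf s j r
      = -(-2:ℚ)^j / (((s-j).factorial:ℚ) * (j.factorial:ℚ)) := by
  have h : ∀ r ∈ range (j+1), cf s j r
      = (-(1:ℚ)/(((s-j).factorial:ℚ)*(j.factorial:ℚ))) * ((j.choose r : ℚ) * (-3:ℚ)^r) := by
    intro r hr
    rw [Finset.mem_range] at hr
    have hr' : r ≤ j := by omega
    rw [cf, Nat.cast_choose ℚ hr']
    have h1 : ((s-j).factorial:ℚ) ≠ 0 := Nat.cast_ne_zero.2 (Nat.factorial_ne_zero _)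
    have h2 : (r.factorial:ℚ) ≠ 0 := Nat.cast_ne_zero.2 (Nat.factorial_ne_zero _)
    have h3 : ((j-r).factorial:ℚ) ≠ 0 := Nat.cast_ne_zero.2 (Nat.factorial_ne_zero _)
    have h4 : (j.factorial:ℚ) ≠ 0 := Nat.cast_ne_zero.2 (Nat.factorial_ne_zero _)
    field_simp
  rw [Finset.sum_congr rfl h, ← Finset.mul_sum, SA3]
  ring

lemma pPoly_coeff_s (s : ℕ) (hs : 1 ≤ s) :
    (pPoly s).coeff s = (-1:ℚ)^(s+1) / (s.factorial : ℚ) := by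
  unfold pPoly
  rw [finset_sum_coeff]
  have hterm : ∀ j ∈ range (s+1), (∑ r ∈ range (j+1), C (cf s j r) * Mp s j r).coeff s
      = (-(1:ℚ)/(s.factorial:ℚ)) * ((s.choose j : ℚ) * (-2:ℚ)^j) := by
    intro j hj
    rw [Finset.mem_range] at hj
    have hj' : j ≤ s := by omega
    rw [finset_sum_coeff]
    have : ∀ r ∈ range (j+1), (C (cf s j r) * Mp s j r).coeff s = cf s j r := by
      intro r hr
      rw [Finset.mem_range] at hr
      rw [coeff_C_mul]
      have hM : (Mp s j r).coeff s = 1 := by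
        have hd := Mp_natDegree s j r hj' (by omega)
        have := (Mp_monic s j r).coeff_natDegree
        rwa [hd] at this
      rw [hM, mul_one]
    rw [Finset.sum_congr rfl this, inner0 s j hj', Nat.cast_choose ℚ hj']
    have h1 : ((s-j).factorial:ℚ) ≠ 0 := Nat.cast_ne_zero.2 (Nat.factorial_ne_zero _)
    have h4 : (j.factorial:ℚ) ≠ 0 := Nat.cast_ne_zero.2 (Nat.factorial_ne_zero _)
    have h5 : (s.factorial:ℚ) ≠ 0 := Nat.cast_ne_zero.2 (Nat.factorial_ne_zero _)
    field_simp
  rw [Finset.sum_congr rfl hterm, ← Finset.mul_sum, SA2]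
  have h5 : (s.factorial:ℚ) ≠ 0 := Nat.cast_ne_zero.2 (Nat.factorial_ne_zero _)
  field_simp
  ring

lemma sum_addc (n : ℕ) (c : ℚ) :
    ∑ i ∈ range n, (c + (i:ℚ)) = (n:ℚ)*c + (n:ℚ)*((n:ℚ)-1)/2 := by
  induction n with
  | zero => simp
  | succ t ih => rw [Finset.sum_range_succ, ih]; push_cast; ring

lemma sum_csub (n : ℕ) (c : ℚ) :
    ∑ i ∈ range n, (c - (i:ℚ)) = (n:ℚ)*c - (n:ℚ)*((n:ℚ)-1)/2 := by
  induction n with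
  | zero => simp
  | succ t ih => rw [Finset.sum_range_succ, ih]; push_cast; ring

lemma sum_subc (n : ℕ) (c : ℚ) :
    ∑ i ∈ range n, ((i:ℚ) - c) = (n:ℚ)*((n:ℚ)-1)/2 - (n:ℚ)*c := by
  induction n with
  | zero => simp
  | succ t ih => rw [Finset.sum_range_succ, ih]; push_cast; ring

lemma Ej_eq (s j : ℕ) (hj : j ≤ s) :
    (if j < s then (s:ℚ) else 0) + ∑ i ∈ range (s - j - 1), ((i:ℚ) - ((s:ℚ) - 2*(j:ℚ) - 1))
      = (s:ℚ) + ((s:ℚ)-(j:ℚ)-1)*((s:ℚ)-(j:ℚ)-2)/2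
        - ((s:ℚ)-(j:ℚ)-1)*((s:ℚ)-2*(j:ℚ)-1) := by
  rw [sum_subc]
  by_cases h : j < s
  · rw [if_pos h]
    have hc : ((s - j - 1 : ℕ) : ℚ) = (s:ℚ) - (j:ℚ) - 1 := by
      have : s - j - 1 = s - (j+1) := by omega
      rw [this, Nat.cast_sub (by omega : j + 1 ≤ s)]
      push_cast; ring
    rw [hc]; ring
  · have hjs : j = s := by omega
    have hq : (j:ℚ) = (s:ℚ) := by exact_mod_cast congrArg Nat.cast hjs
    have hz : s - j - 1 = 0 := by omega
    rw [if_neg h, hz, hq]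
    push_cast; ring

lemma inner1 (s j : ℕ) (hj : j ≤ s) :
    ∑ r ∈ range (j+1), cf s j r * (Mp s j r).nextCoeff
      = (-2:ℚ)^j * ((s:ℚ) + ((s:ℚ)-1)*((j:ℚ)-(s:ℚ))/2)
        / (((s-j).factorial:ℚ) * (j.factorial:ℚ)) := by
  set Cj : ℚ := (s:ℚ) + ((s:ℚ)-(j:ℚ)-1)*((s:ℚ)-(j:ℚ)-2)/2
        - ((s:ℚ)-(j:ℚ)-1)*((s:ℚ)-2*(j:ℚ)-1) + (j:ℚ)^2 + (j:ℚ)*((j:ℚ)-1)/2 with hCj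
  have key : ∀ r ∈ range (j+1), cf s j r * (Mp s j r).nextCoeff
      = ((1:ℚ)/(((s-j).factorial:ℚ)*(j.factorial:ℚ)))
        * (((j.choose r : ℚ) * (-3:ℚ)^r) * Cj
           + ((j.choose r : ℚ) * (-3:ℚ)^r * (r:ℚ)) * (1 - (s:ℚ))) := by
    intro r hr
    rw [Finset.mem_range] at hr
    have hr' : r ≤ j := by omega
    rw [Mp_nextCoeff]
    rw [Ej_eq s j hj, sum_csub, sum_addc]
    have hD : ((j - r : ℕ) : ℚ) = (j:ℚ) - (r:ℚ) := by
      rw [Nat.cast_sub hr']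
    rw [hD, cf, Nat.cast_choose ℚ hr']
    have h1 : ((s-j).factorial:ℚ) ≠ 0 := Nat.cast_ne_zero.2 (Nat.factorial_ne_zero _)
    have h2 : (r.factorial:ℚ) ≠ 0 := Nat.cast_ne_zero.2 (Nat.factorial_ne_zero _)
    have h3 : ((j-r).factorial:ℚ) ≠ 0 := Nat.cast_ne_zero.2 (Nat.factorial_ne_zero _)
    have h4 : (j.factorial:ℚ) ≠ 0 := Nat.cast_ne_zero.2 (Nat.factorial_ne_zero _)
    rw [hCj]
    field_simp
    ring
  rw [Finset.sum_congr rfl key, ← Finset.mul_sum, Finset.sum_add_distrib,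
      ← Finset.sum_mul, ← Finset.sum_mul, SA3, SB3]
  have h1 : ((s-j).factorial:ℚ) ≠ 0 := Nat.cast_ne_zero.2 (Nat.factorial_ne_zero _)
  have h4 : (j.factorial:ℚ) ≠ 0 := Nat.cast_ne_zero.2 (Nat.factorial_ne_zero _)
  rw [hCj]
  field_simp
  ring

lemma pPoly_coeff_s1 (s : ℕ) (hs : 1 ≤ s) :
    (pPoly s).coeff (s-1) = (-1:ℚ)^s * ((s:ℚ)+1) / (2 * ((s-1).factorial : ℚ)) := by
  unfold pPoly
  rw [finset_sum_coeff]
  have hterm : ∀ j ∈ range (s+1), (∑ r ∈ range (j+1), C (cf s j r) * Mp s j r).coeff (s-1)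
      = ((1:ℚ)/(s.factorial:ℚ)) * (((s.choose j : ℚ) * (-2:ℚ)^j)
          * ((s:ℚ) + ((s:ℚ)-1)*((j:ℚ)-(s:ℚ))/2)) := by
    intro j hj
    rw [Finset.mem_range] at hj
    have hj' : j ≤ s := by omega
    rw [finset_sum_coeff]
    have hco : ∀ r ∈ range (j+1), (C (cf s j r) * Mp s j r).coeff (s-1)
        = cf s j r * (Mp s j r).nextCoeff := by
      intro r hr
      rw [Finset.mem_range] at hr
      rw [coeff_C_mul]
      congr 1
      have hd := Mp_natDegree s j r hj' (by omega)
      rw [nextCoeff, hd, if_neg (by omega : ¬ s = 0)]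
    rw [Finset.sum_congr rfl hco, inner1 s j hj', Nat.cast_choose ℚ hj']
    have h1 : ((s-j).factorial:ℚ) ≠ 0 := Nat.cast_ne_zero.2 (Nat.factorial_ne_zero _)
    have h4 : (j.factorial:ℚ) ≠ 0 := Nat.cast_ne_zero.2 (Nat.factorial_ne_zero _)
    have h5 : (s.factorial:ℚ) ≠ 0 := Nat.cast_ne_zero.2 (Nat.factorial_ne_zero _)
    field_simp
  rw [Finset.sum_congr rfl hterm]
  have expand : ∀ j ∈ range (s+1),
      ((1:ℚ)/(s.factorial:ℚ)) * (((s.choose j : ℚ) * (-2:ℚ)^j)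
          * ((s:ℚ) + ((s:ℚ)-1)*((j:ℚ)-(s:ℚ))/2))
      = ((1:ℚ)/(s.factorial:ℚ)) * (((s:ℚ) - ((s:ℚ)-1)*(s:ℚ)/2) * ((s.choose j : ℚ) * (-2:ℚ)^j)
          + (((s:ℚ)-1)/2) * ((s.choose j : ℚ) * (-2:ℚ)^j * (j:ℚ))) := by
    intro j _
    ring
  rw [Finset.sum_congr rfl expand, ← Finset.mul_sum, Finset.sum_add_distrib,
      ← Finset.mul_sum, ← Finset.mul_sum, SA2, SB2]
  have h5 : (s.factorial:ℚ) ≠ 0 := Nat.cast_ne_zero.2 (Nat.factorial_ne_zero _)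
  have h6 : ((s-1).factorial:ℚ) ≠ 0 := Nat.cast_ne_zero.2 (Nat.factorial_ne_zero _)
  have hsf : (s.factorial:ℚ) = (s:ℚ) * ((s-1).factorial:ℚ) := by
    cases s with
    | zero => omega
    | succ t =>
      simp only [Nat.add_sub_cancel, Nat.factorial_succ]
      push_cast; ring
  rw [hsf]
  have hs0 : (s:ℚ) ≠ 0 := Nat.cast_ne_zero.2 (by omega)
  field_simp
  ring

lemma sum_shift (s k : ℕ) (hk : s+1 ≤ k) (F : ℕ → ℚ) :
    ∑ j ∈ range (s+1), F (k-j) = ∑ p ∈ Finset.Icc (k-s) k, F p := by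
  refine Finset.sum_nbij' (fun j => k - j) (fun p => k - p) ?_ ?_ ?_ ?_ ?_
  · intro a ha; rw [Finset.mem_range] at ha; rw [Finset.mem_Icc]
    omega
  · intro a ha; rw [Finset.mem_Icc] at ha; rw [Finset.mem_range]
    omega
  · intro a ha; rw [Finset.mem_range] at ha; omega
  · intro a ha; rw [Finset.mem_Icc] at ha; omega
  · intro a _; rfl

lemma prod_neg_linear (n : ℕ) (c k : ℚ) :
    ffall (c - k) n = (-1:ℚ)^n * ∏ i ∈ range n, (k - (c - (i:ℚ))) := by
  unfold ffall
  have hc : ((-1 : ℚ)) ^ n = ∏ _i ∈ range n, (-1 : ℚ) := by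
    rw [Finset.prod_const, card_range]
  rw [hc, ← Finset.prod_mul_distrib]
  exact Finset.prod_congr rfl fun i _ => by ring


lemma pPoly_eval (s k : ℕ) (hs : 1 ≤ s) (hk : s + 1 ≤ k) :
    (pPoly s).eval (k:ℚ) = aP k ((k:ℚ) - s) := by
  have hks : 1 ≤ k - s := by omega
  rw [aP]
  set x : ℚ := (k:ℚ) - (s:ℚ) with hx
  have hfz : (3:ℚ)^k * gchoose x k = 0 := by
    have hxx : x = ((k - s : ℕ):ℚ) := by rw [hx, Nat.cast_sub (by omega)]
    rw [hxx, gchoose_nat_eq_zero (k-s) k (by omega), mul_zero]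
  rw [hfz, zero_add]
  have hsub : Finset.Icc (k-s) k ⊆ Finset.Icc 1 k := by
    intro a ha; rw [Finset.mem_Icc] at *; omega
  have hvanish : ∀ p ∈ Finset.Icc 1 k, p ∉ Finset.Icc (k-s) k →
      (-1:ℚ)^p * (x / p) * gchoose (x - p - 1) ((p:ℤ) - 1) *
        ∑ r ∈ range (k - p + 1), (3:ℚ)^r * gchoose (x - 2*p) r
          * gchoose (p:ℚ) ((k:ℤ) - p - r) = 0 := by
    intro p hp hnp
    rw [Finset.mem_Icc] at hp hnp
    have hplt : p < k - s := by omega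
    by_cases hcase : 2*p ≤ k - s
    · have hz : ∀ r ∈ range (k-p+1),
          (3:ℚ)^r * gchoose (x - 2*p) r * gchoose (p:ℚ) ((k:ℤ) - p - r) = 0 := by
        intro r hr
        rw [Finset.mem_range] at hr
        by_cases hrc : r < k - 2*p
        · have hidx : ((k:ℤ) - p - r) = ((k - p - r : ℕ) : ℤ) := by push_cast; omega
          rw [hidx, gchoose_nat_eq_zero p (k-p-r) (by omega), mul_zero]
        · have harg : x - 2*(p:ℚ) = ((k - s - 2*p : ℕ):ℚ) := by
            rw [hx, Nat.cast_sub (by omega : 2*p ≤ k - s), Nat.cast_sub (by omega : s ≤ k)]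
            push_cast; ring
          rw [harg, gchoose_nat_eq_zero (k-s-2*p) r (by omega), mul_zero, zero_mul]
      rw [Finset.sum_eq_zero hz, mul_zero]
    · have harg : x - (p:ℚ) - 1 = ((k - s - p - 1 : ℕ):ℚ) := by
        rw [hx, Nat.cast_sub (by omega : 1 ≤ k - s - p), Nat.cast_sub (by omega : p ≤ k - s),
          Nat.cast_sub (by omega : s ≤ k)]
        push_cast; ring
      have hidx : ((p:ℤ) - 1) = ((p - 1:ℕ):ℤ) := by push_cast; omega
      rw [harg, hidx, gchoose_nat_eq_zero (k-s-p-1) (p-1) (by omega), mul_zero, zero_mul]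
  rw [← Finset.sum_subset hsub hvanish, ← sum_shift s k hk]
  rw [pPoly, eval_finset_sum]
  refine Finset.sum_congr rfl fun j hjm => ?_
  rw [Finset.mem_range] at hjm
  have hj : j ≤ s := by omega
  rw [eval_finset_sum]
  have hpQ : ((k - j:ℕ):ℚ) = (k:ℚ) - (j:ℚ) := by
    rw [Nat.cast_sub (by omega : j ≤ k)]
  have hpZ : ((k - j:ℕ):ℤ) = (k:ℤ) - (j:ℤ) := by
    rw [Int.ofNat_sub (by omega : j ≤ k)]
  have hrange : k - (k - j) + 1 = j + 1 := by omega
  rw [hrange, Finset.mul_sum]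
  refine Finset.sum_congr rfl fun r hrm => ?_
  rw [Finset.mem_range] at hrm
  have hr : r ≤ j := by omega
  -- evaluate Mp
  simp only [eval_mul, eval_C, Mp, eval_prod, eval_sub, eval_X, apply_ite (Polynomial.eval (k:ℚ)),
    eval_one]
  have hA : ∏ i ∈ range (s-j-1), ((k:ℚ) - ((i:ℚ) - ((s:ℚ) - 2*(j:ℚ) - 1)))
      = ffall ((k:ℚ)+(s:ℚ)-2*(j:ℚ)-1) (s-j-1) := by
    unfold ffall
    exact Finset.prod_congr rfl fun i _ => by ring
  have hG : gchoose (x - 2*((k-j:ℕ):ℚ)) (r:ℤ)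
      = (-1:ℚ)^r * (∏ i ∈ range r, ((k:ℚ) - (2*(j:ℚ) - (s:ℚ) - (i:ℚ)))) / (r.factorial:ℚ) := by
    have harg : x - 2*((k-j:ℕ):ℚ) = (2*(j:ℚ) - (s:ℚ)) - (k:ℚ) := by
      rw [hx, hpQ]; ring
    rw [harg, gchoose_natCast, prod_neg_linear r (2*(j:ℚ) - (s:ℚ)) (k:ℚ)]
  have hH : gchoose ((k-j:ℕ):ℚ) ((k:ℤ) - ((k-j:ℕ):ℤ) - (r:ℤ))
      = (∏ i ∈ range (j-r), ((k:ℚ) - ((j:ℚ)+(i:ℚ))))/(((j-r).factorial:ℚ)) := by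
    have hidx : ((k:ℤ) - ((k-j:ℕ):ℤ) - (r:ℤ)) = ((j - r : ℕ):ℤ) := by
      rw [hpZ]; push_cast; omega
    rw [hidx, gchoose_natCast]
    congr 1
    unfold ffall
    exact Finset.prod_congr rfl fun i _ => by rw [hpQ]; ring
  rw [hG, hH, hA]
  have hne1 : ((s-j).factorial:ℚ) ≠ 0 := Nat.cast_ne_zero.2 (Nat.factorial_ne_zero _)
  have hne2 : (r.factorial:ℚ) ≠ 0 := Nat.cast_ne_zero.2 (Nat.factorial_ne_zero _)
  have hne3 : ((j-r).factorial:ℚ) ≠ 0 := Nat.cast_ne_zero.2 (Nat.factorial_ne_zero _)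
  by_cases hjs : j < s
  · rw [if_pos hjs]
    have hOUT := key1 (s-j) (k-j) (by omega) (by omega)
    have harg1 : x - ((k-j:ℕ):ℚ) - 1 = -(((s-j:ℕ)):ℚ) - 1 := by
      rw [hx, hpQ, Nat.cast_sub (by omega : j ≤ s)]; ring
    have harg2 : ((k-j:ℕ):ℚ) + ((s-j:ℕ):ℚ) - 1 = (k:ℚ)+(s:ℚ)-2*(j:ℚ)-1 := by
      rw [hpQ, Nat.cast_sub (by omega : j ≤ s)]; ring
    have harg3 : (s-j) - 1 = s - j - 1 := rfl
    rw [harg2] at hOUT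
    rw [harg1]
    -- goal: cf * ((k-s)*ffA*G*H-ish) = (-1)^(k-j) * (x/↑(k-j)) * gchoose(...) * (3^r * ...)
    have hp0 : ((k-j:ℕ):ℚ) ≠ 0 := by
      rw [hpQ]
      intro hcon
      have h9 : (k:ℚ) = (j:ℚ) := by linarith
      have h10 : k = j := by exact_mod_cast h9
      omega
    rw [cf, neg_pow 3 r]
    have h2 : (-1:ℚ)^(k-j) * (x / ((k-j:ℕ):ℚ)) * gchoose (-((s-j:ℕ):ℚ)-1) (((k-j:ℕ):ℤ)-1)
        = x * (-ffall ((k:ℚ)+(s:ℚ)-2*(j:ℚ)-1) (s-j-1) / (((s-j).factorial:ℚ))) := by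
      rw [← hOUT]; ring
    rw [h2, hx]
    field_simp
  · have hj2 : j = s := by omega
    subst hj2
    rw [if_neg hjs]
    have hz0 : j - j - 1 = 0 := by omega
    rw [hz0]
    have hOUT := keyS (k-j) (by omega)
    have harg1 : x - ((k-j:ℕ):ℚ) - 1 = -1 := by
      rw [hx, hpQ]; push_cast; ring
    rw [harg1]
    have hp0 : ((k-j:ℕ):ℚ) ≠ 0 := by
      rw [hpQ]
      intro hcon
      have : (k:ℚ) = (j:ℚ) := by linarith
      have : k = j := by exact_mod_cast this
      omega
    rw [cf, neg_pow 3 r]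
    have hf0 : ffall ((k:ℚ) + (j:ℚ) - 2*(j:ℚ) - 1) 0 = 1 := by simp [ffall]
    have hjj : j - j = 0 := Nat.sub_self j
    have hxp : x = ((k-j:ℕ):ℚ) := by rw [hx, hpQ]
    rw [hf0, hjj, hxp, div_self hp0]
    field_simp
    linear_combination (-((∏ i ∈ range r, ((k:ℚ) - ((j:ℚ)*(2-1) - (i:ℚ))))
      * (∏ i ∈ range (j-r), ((k:ℚ) - ((j:ℚ)+(i:ℚ)))))) * hOUT


lemma pPoly_coeff_ne (s : ℕ) (hs : 1 ≤ s) : (pPoly s).coeff s ≠ 0 := by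
  rw [pPoly_coeff_s s hs]
  have h5 : (s.factorial:ℚ) ≠ 0 := Nat.cast_ne_zero.2 (Nat.factorial_ne_zero _)
  positivity

lemma pPoly_natDegree (s : ℕ) (hs : 1 ≤ s) : (pPoly s).natDegree = s := by
  refine le_antisymm ?_ (Polynomial.le_natDegree_of_ne_zero (pPoly_coeff_ne s hs))
  refine Polynomial.natDegree_sum_le_of_forall_le _ _ fun j hj => ?_
  rw [Finset.mem_range] at hj
  refine Polynomial.natDegree_sum_le_of_forall_le _ _ fun r hr => ?_
  rw [Finset.mem_range] at hr
  refine le_trans (Polynomial.natDegree_C_mul_le _ _) ?_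
  rw [Mp_natDegree s j r (by omega) (by omega)]

lemma pPoly_dvd (s : ℕ) (hs : 1 ≤ s) : (X - C (s:ℚ)) ∣ pPoly s := by
  refine Finset.dvd_sum fun j hj => ?_
  rw [Finset.mem_range] at hj
  refine Finset.dvd_sum fun r hr => ?_
  rw [Finset.mem_range] at hr
  refine Dvd.dvd.mul_left ?_ _
  unfold Mp
  by_cases hjs : j < s
  · rw [if_pos hjs]
    exact dvd_mul_of_dvd_left (dvd_mul_of_dvd_left (dvd_mul_of_dvd_left dvd_rfl _) _) _
  · have hj2 : j = s := by omega
    subst hj2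
    rw [if_neg hjs]
    by_cases hr0 : 1 ≤ r
    · have hmem : (0:ℕ) ∈ range r := Finset.mem_range.2 (by omega)
      have hfac : (X - C (2*(j:ℚ) - (j:ℚ) - ((0:ℕ):ℚ))) = X - C ((j:ℚ)) := by
        have h0 : 2*(j:ℚ) - (j:ℚ) - ((0:ℕ):ℚ) = (j:ℚ) := by push_cast; ring
        rw [h0]
      have : (X - C ((j:ℚ))) ∣ ∏ i ∈ range r, (X - C (2*(j:ℚ) - (j:ℚ) - (i:ℚ))) := by
        rw [← hfac]
        exact Finset.dvd_prod_of_mem _ hmem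
      exact (this.mul_left _).mul_right _
    · have hrr : r = 0 := by omega
      subst hrr
      have hmem : (0:ℕ) ∈ range (j - 0) := Finset.mem_range.2 (by omega)
      have hfac : (X - C ((j:ℚ) + ((0:ℕ):ℚ))) = X - C ((j:ℚ)) := by
        have h0 : (j:ℚ) + ((0:ℕ):ℚ) = (j:ℚ) := by push_cast; ring
        rw [h0]
      have : (X - C ((j:ℚ))) ∣ ∏ i ∈ range (j - 0), (X - C ((j:ℚ) + (i:ℚ))) := by
        rw [← hfac]
        exact Finset.dvd_prod_of_mem _ hmem
      exact this.mul_left _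

lemma aP_zero (s : ℕ) (hs : 1 ≤ s) : aP s 0 = 0 := by
  unfold aP
  have h1 : gchoose (0:ℚ) (s:ℤ) = 0 := by
    have : ((0:ℕ):ℚ) = (0:ℚ) := by norm_num
    rw [← this]
    exact gchoose_nat_eq_zero 0 s (by omega)
  rw [h1, mul_zero, zero_add]
  refine Finset.sum_eq_zero fun p hp => ?_
  simp [zero_div]

lemma pPoly_eval_s (s : ℕ) (hs : 1 ≤ s) : (pPoly s).eval ((s:ℚ)) = 0 := by
  obtain ⟨q, hq⟩ := pPoly_dvd s hs
  rw [hq]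
  simp


/-- For each `s ≥ 1` there is a polynomial `p_s ∈ ℚ[x]` of degree `s` with
`ã^P_k(k-s) = p_s(k)` for all integers `k ≥ s`; the coefficient of `x^s` is
`(-1)^(s+1)/s!`, the coefficient of `x^(s-1)` is `(-1)^s (s+1)/(2 (s-1)!)`, and
`p_s(s) = 0` (equivalently `ã^P_s(0) = 0`), so `x - s` divides `p_s`. -/
theorem aP_shifted_polynomial (s : ℕ) (hs : 1 ≤ s) :
    ∃ p : Polynomial ℚ,
      p.natDegree = s ∧
      (∀ k : ℕ, s ≤ k → p.eval (k : ℚ) = aP k ((k : ℚ) - s)) ∧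
      p.coeff s = (-1 : ℚ) ^ (s + 1) / (s.factorial : ℚ) ∧
      p.coeff (s - 1) = (-1 : ℚ) ^ s * ((s : ℚ) + 1) / (2 * ((s - 1).factorial : ℚ)) ∧
      p.eval (s : ℚ) = 0 ∧ aP s 0 = 0 ∧
      (Polynomial.X - Polynomial.C (s : ℚ)) ∣ p := by
  refine ⟨pPoly s, pPoly_natDegree s hs, ?_, pPoly_coeff_s s hs, pPoly_coeff_s1 s hs,
    pPoly_eval_s s hs, aP_zero s hs, pPoly_dvd s hs⟩
  intro k hk
  rcases eq_or_lt_of_le hk with h | h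
  · subst h
    rw [pPoly_eval_s s hs]
    have : (s:ℚ) - (s:ℚ) = 0 := by ring
    rw [this, aP_zero s hs]
  · exact pPoly_eval s k hs (by omega)
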